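/- Let X be a Banach space and T : X → X a bounded operator that fails to be upper semi-Fredholm. Then for every ε > 0 there exists an infinite-dimensional closed subspace Y_ε ⊆ X with ‖T|_{Y_ε}‖ < ε, and the restriction of T to Y_ε is compact. -/

import Mathlib

open Filter Set
set_option maxHeartbeats 1600000
set_option synthInstance.maxHeartbeats 400000

section Aux

lemma aux_isClosed_sup_findim {X : Type*} [NormedAddCommGroup X]
    [NormedSpace ℝ X] (M F : Submodule ℝ X) (hM : IsClosed (M : Set X))
    [FiniteDimensional ℝ F] : IsClosed ((M ⊔ F : Submodule ℝ X) : Set X) := by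
  haveI : IsClosed (M : Set X) := hM
  let π : X →L[ℝ] (X ⧸ M) := ⟨M.mkQ, by
    refine AddMonoidHomClass.continuous_of_bound M.mkQ 1 fun x => ?_
    simpa using Submodule.Quotient.norm_mk_le M x⟩
  have hπ : (π : X → X ⧸ M) = M.mkQ := rfl
  have hG : IsClosed ((F.map M.mkQ : Submodule ℝ (X ⧸ M)) : Set (X ⧸ M)) :=
    Submodule.closed_of_finiteDimensional _
  have key : ((M ⊔ F : Submodule ℝ X) : Set X) = M.mkQ ⁻¹' (F.map M.mkQ) := by
    have : Submodule.comap M.mkQ (F.map M.mkQ) = F ⊔ M := by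
      rw [Submodule.comap_map_eq, Submodule.ker_mkQ]
    rw [sup_comm, ← this]
    rfl
  rw [key]
  exact hG.preimage (hπ ▸ π.continuous)

/-- If the range of `T` is not closed, then in any finite intersection of kernels of
functionals there is a unit vector on which `T` is small. -/
lemma aux_exists_small {X : Type*} [NormedAddCommGroup X]
    [NormedSpace ℝ X] [CompleteSpace X] (T : X →L[ℝ] X)
    (hr : ¬ IsClosed ((LinearMap.range (T : X →ₗ[ℝ] X) : Submodule ℝ X) : Set X))
    {ι : Type*} [Fintype ι] (f : ι → (X →L[ℝ] ℝ)) {δ : ℝ} (hδ : 0 < δ) :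
    ∃ x : X, ‖x‖ = 1 ∧ (∀ i, f i x = 0) ∧ ‖T x‖ < δ := by
  by_contra hcon
  push_neg at hcon
  let φ : X →L[ℝ] (ι → ℝ) := ContinuousLinearMap.pi f
  set Z : Submodule ℝ X := LinearMap.ker (φ : X →ₗ[ℝ] (ι → ℝ)) with hZ
  have hmemZ : ∀ x : X, x ∈ Z ↔ ∀ i, f i x = 0 := by
    intro x
    constructor
    · intro hx i
      have : φ x = 0 := hx
      exact congrFun this i
    · intro hx
      show φ x = 0
      funext i
      exact hx i
  have hbb : ∀ z ∈ Z, δ * ‖z‖ ≤ ‖T z‖ := by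
    intro z hz
    rcases eq_or_ne z 0 with rfl | hz0
    · simp
    · have hnz : ‖z‖ ≠ 0 := norm_ne_zero_iff.mpr hz0
      set u : X := ‖z‖⁻¹ • z with hu
      have hun : ‖u‖ = 1 := by
        rw [hu, norm_smul, norm_inv, norm_norm, inv_mul_cancel₀ hnz]
      have huZ : ∀ i, f i u = 0 := by
        intro i
        have := (hmemZ z).mp hz i
        simp [hu, map_smul, this]
      have hd := hcon u hun huZ
      have hTu : ‖T u‖ = ‖z‖⁻¹ * ‖T z‖ := by
        rw [hu, map_smul, norm_smul, norm_inv, norm_norm]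
      rw [hTu] at hd
      have hpos : (0:ℝ) < ‖z‖ := norm_pos_iff.mpr hz0
      calc δ * ‖z‖ ≤ (‖z‖⁻¹ * ‖T z‖) * ‖z‖ := by nlinarith
        _ = ‖T z‖ := by field_simp
  have hZclosed : IsClosed (Z : Set X) := ContinuousLinearMap.isClosed_ker φ
  haveI : CompleteSpace Z := hZclosed.completeSpace_coe
  let Trest : Z →L[ℝ] X := T.comp Z.subtypeL
  have hanti : AntilipschitzWith (⟨δ, hδ.le⟩⁻¹ : NNReal) Trest := by
    apply AddMonoidHomClass.antilipschitz_of_bound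
    intro z
    have h1 := hbb z z.2
    have h2 : ‖(z:X)‖ ≤ δ⁻¹ * ‖T z‖ := by
      rw [le_inv_mul_iff₀ hδ]
      exact h1
    exact h2
  have hrangeclosed : IsClosed (Set.range Trest) :=
    hanti.isClosed_range Trest.uniformContinuous
  have hrangeeq : Set.range (Trest : Z → X) = ((Z.map (T : X →ₗ[ℝ] X) : Submodule ℝ X) : Set X) := by
    ext y
    simp only [Submodule.map_coe, Set.mem_range, Set.mem_image]
    constructor
    · rintro ⟨z, rfl⟩; exact ⟨z, z.2, rfl⟩
    · rintro ⟨z, hz, rfl⟩; exact ⟨⟨z, hz⟩, rfl⟩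
  have hMclosed : IsClosed ((Z.map (T : X →ₗ[ℝ] X) : Submodule ℝ X) : Set X) := hrangeeq ▸ hrangeclosed
  have hquot : FiniteDimensional ℝ (X ⧸ Z) := by
    haveI : FiniteDimensional ℝ (LinearMap.range (φ : X →ₗ[ℝ] (ι → ℝ))) := inferInstance
    exact LinearEquiv.finiteDimensional (φ : X →ₗ[ℝ] (ι → ℝ)).quotKerEquivRange.symm
  obtain ⟨F, hF⟩ := Submodule.exists_isCompl Z
  haveI : FiniteDimensional ℝ F :=
    LinearEquiv.finiteDimensional (Submodule.quotientEquivOfIsCompl Z F hF)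
  haveI : FiniteDimensional ℝ (F.map (T : X →ₗ[ℝ] X)) := Module.Finite.map F (T : X →ₗ[ℝ] X)
  have hrT : LinearMap.range (T : X →ₗ[ℝ] X) = Z.map (T : X →ₗ[ℝ] X) ⊔ F.map (T : X →ₗ[ℝ] X) := by
    rw [LinearMap.range_eq_map, ← hF.sup_eq_top, Submodule.map_sup]
  apply hr
  rw [hrT]
  exact aux_isClosed_sup_findim _ _ hMclosed

/-- A continuous linear functional is a compact operator. -/
lemma aux_compact_functional {Y : Type*} [NormedAddCommGroup Y] [NormedSpace ℝ Y]
    (ψ : Y →L[ℝ] ℝ) : IsCompactOperator (⇑ψ) := by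
  refine ⟨Metric.closedBall 0 (‖ψ‖ + 1), isCompact_closedBall _ _, ?_⟩
  apply Filter.mem_of_superset (Metric.ball_mem_nhds (0:Y) one_pos)
  intro y hy
  simp only [Metric.mem_ball, dist_zero_right] at hy
  simp only [Set.mem_preimage, Metric.mem_closedBall, dist_zero_right]
  calc ‖ψ y‖ ≤ ‖ψ‖ * ‖y‖ := ψ.le_opNorm y
    _ ≤ ‖ψ‖ * 1 := mul_le_mul_of_nonneg_left hy.le (norm_nonneg _)
    _ ≤ ‖ψ‖ + 1 := by linarith [norm_nonneg ψ]

/-- tail geometric bound -/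
lemma aux_tail (N : ℕ) (u : Finset ℕ) (hu : ∀ k ∈ u, N ≤ k) :
    ∑ k ∈ u, ((2:ℝ)⁻¹)^k ≤ 2 * (2:ℝ)⁻¹^N := by
  have hsub : u ⊆ Finset.Ico N (u.sup id + 1) := fun k hk =>
    Finset.mem_Ico.mpr ⟨hu k hk, Nat.lt_succ_of_le (Finset.le_sup (f := id) hk)⟩
  calc ∑ k ∈ u, ((2:ℝ)⁻¹)^k
      ≤ ∑ k ∈ Finset.Ico N (u.sup id + 1), ((2:ℝ)⁻¹)^k :=
        Finset.sum_le_sum_of_subset_of_nonneg hsub (fun k _ _ => by positivity)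
    _ = ∑ k ∈ Finset.range (u.sup id + 1 - N), ((2:ℝ)⁻¹)^(N + k) :=
        Finset.sum_Ico_eq_sum_range _ _ _
    _ = (2:ℝ)⁻¹^N * ∑ k ∈ Finset.range (u.sup id + 1 - N), ((2:ℝ)⁻¹)^k := by
        rw [Finset.mul_sum]
        exact Finset.sum_congr rfl fun k _ => by rw [pow_add]
    _ ≤ (2:ℝ)⁻¹^N * 2 := by
        have h2 := sum_geometric_two_le (u.sup id + 1 - N)
        rw [one_div] at h2
        exact mul_le_mul_of_nonneg_left h2 (by positivity)
    _ = 2 * (2:ℝ)⁻¹^N := by ring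

end Aux

/-- If a bounded operator `T : X → X` on a Banach space fails to be upper semi-Fredholm
(i.e. it is not the case that `ker T` is finite-dimensional and `range T` is closed), then
for every `ε > 0` there is an infinite-dimensional closed subspace `Y_ε ⊆ X` with
`‖T|_{Y_ε}‖ < ε`, and the restriction of `T` to `Y_ε` is compact. -/
theorem small_restriction_of_not_upperSemiFredholm {X : Type*} [NormedAddCommGroup X]
    [NormedSpace ℝ X] [CompleteSpace X] (T : X →L[ℝ] X)
    (hT : ¬ (FiniteDimensional ℝ (LinearMap.ker (T : X →ₗ[ℝ] X)) ∧
      IsClosed ((LinearMap.range (T : X →ₗ[ℝ] X) : Submodule ℝ X) : Set X))) :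
    ∀ ε : ℝ, 0 < ε → ∃ Y : Submodule ℝ X, IsClosed (Y : Set X) ∧
      ¬ FiniteDimensional ℝ Y ∧
      (∃ C : ℝ, 0 ≤ C ∧ C < ε ∧ ∀ y ∈ Y, ‖T y‖ ≤ C * ‖y‖) ∧
      IsCompactOperator (fun y : Y => T (y : X)) := by
  intro ε hε
  by_cases hker : FiniteDimensional ℝ (LinearMap.ker (T : X →ₗ[ℝ] X))
  case neg =>
    -- the kernel is infinite-dimensional: take `Y = ker T`.
    refine ⟨LinearMap.ker (T : X →ₗ[ℝ] X), ContinuousLinearMap.isClosed_ker T, hker, ⟨ε/2, by linarith,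
      by linarith, fun y hy => ?_⟩, ?_⟩
    · have : T y = 0 := hy
      rw [this, norm_zero]
      positivity
    · have : (fun y : LinearMap.ker (T : X →ₗ[ℝ] X) => T (y : X)) = fun _ => (0 : X) := by
        funext y
        exact y.2
      rw [this]
      exact isCompactOperator_zero
  case pos =>
    have hr : ¬ IsClosed ((LinearMap.range (T : X →ₗ[ℝ] X) : Submodule ℝ X) : Set X) := by
      intro h; exact hT ⟨hker, h⟩
    set ε' : ℝ := ε / 8 with hε'
    have hε'pos : 0 < ε' := by positivity
    -- norming functionals
    have hgex : ∀ v : X, ‖v‖ = 1 → ∃ g : X →L[ℝ] ℝ, ‖g‖ = 1 ∧ g v = 1 := by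
      intro v hv
      have hv0 : v ≠ 0 := by
        intro h; rw [h, norm_zero] at hv; norm_num at hv
      obtain ⟨g, hg1, hg2⟩ := exists_dual_vector ℝ v (norm_ne_zero_iff.mpr hv0)
      exact ⟨g, hg1, by rw [hg2, hv]; norm_num⟩
    classical
    obtain ⟨g, hgnorm, hgval⟩ : ∃ g : X → (X →L[ℝ] ℝ),
        (∀ v : X, ‖v‖ = 1 → ‖g v‖ = 1) ∧ (∀ v : X, ‖v‖ = 1 → g v v = 1) := by
      refine ⟨fun v => if h : ‖v‖ = 1 then (hgex v h).choose else 0, ?_, ?_⟩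
      · intro v hv; simp only [dif_pos hv]; exact (hgex v hv).choose_spec.1
      · intro v hv; simp only [dif_pos hv]; exact (hgex v hv).choose_spec.2
    -- build the sequence
    obtain ⟨u, hPu, hru⟩ := exists_seq_of_forall_finset_exists
      (fun p : ℕ × X => ‖p.2‖ = 1 ∧ ‖T p.2‖ < ε' * (4:ℝ)⁻¹^p.1)
      (fun p q => p.1 < q.1 ∧ g p.2 q.2 = 0)
      (by
        intro s hs
        set n : ℕ := (s.sup fun p => p.1) + 1 with hn
        have hδ : 0 < ε' * (4:ℝ)⁻¹^n := by positivity
        obtain ⟨x, hx1, hx2, hx3⟩ := aux_exists_small T hr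
          (fun p : {p // p ∈ s} => g p.1.2) hδ
        refine ⟨(n, x), ⟨hx1, hx3⟩, fun p hp => ⟨?_, hx2 ⟨p, hp⟩⟩⟩
        exact Nat.lt_succ_of_le (Finset.le_sup (f := fun p : ℕ × X => p.1) hp))
    set x : ℕ → X := fun n => (u n).2 with hxdef
    have hx1 : ∀ n, ‖x n‖ = 1 := fun n => (hPu n).1
    have htmono : StrictMono (fun n => (u n).1) := fun m n h => (hru m n h).1
    have hTx : ∀ n, ‖T (x n)‖ < ε' * (4:ℝ)⁻¹^n := by
      intro n
      refine lt_of_lt_of_le (hPu n).2 ?_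
      have h4 : ((4:ℝ)⁻¹)^(u n).1 ≤ ((4:ℝ)⁻¹)^n :=
        pow_le_pow_of_le_one (by norm_num) (by norm_num) htmono.le_apply
      exact mul_le_mul_of_nonneg_left h4 hε'pos.le
    set f : ℕ → (X →L[ℝ] ℝ) := fun n => g (x n) with hfdef
    have hforth : ∀ m n, m < n → f m (x n) = 0 := fun m n h => (hru m n h).2
    have hfx : ∀ n, f n (x n) = 1 := fun n => hgval (x n) (hx1 n)
    have hfn : ∀ n, ‖f n‖ = 1 := fun n => hgnorm (x n) (hx1 n)
    clear_value x f
    -- coordinate functionals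
    let cseq : (n : ℕ) → (Fin n → (X →L[ℝ] ℝ)) := fun n =>
      Nat.rec (motive := fun n => Fin n → (X →L[ℝ] ℝ)) Fin.elim0
        (fun n prev => Fin.snoc prev (f n - ∑ k : Fin n, (f n (x k)) • prev k)) n
    let c : ℕ → (X →L[ℝ] ℝ) := fun n => cseq (n+1) (Fin.last n)
    have hcseq : ∀ n (k : Fin n), cseq n k = c (k : ℕ) := by
      intro n
      induction n with
      | zero => exact fun k => k.elim0
      | succ n ih =>
        intro k
        refine Fin.lastCases ?_ (fun i => ?_) k
        · rfl
        · have h1 : cseq (n+1) i.castSucc = cseq n i := Fin.snoc_castSucc _ _ _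
          rw [h1, ih i]
          rfl
    have hstep : ∀ n, cseq (n+1)
        = Fin.snoc (cseq n) (f n - ∑ k : Fin n, (f n (x k)) • cseq n k) := fun n => rfl
    have hcrec : ∀ n, c n = f n - ∑ k ∈ Finset.range n, (f n (x k)) • c k := by
      intro n
      have h0 : c n = cseq (n+1) (Fin.last n) := rfl
      rw [h0, hstep n, Fin.snoc_last]
      congr 1
      rw [Finset.sum_range fun k => (f n (x k)) • c k]
      exact Finset.sum_congr rfl fun k _ => by rw [hcseq n k]
    clear_value c
    clear hcseq hstep
    clear_value cseq
    -- biorthogonality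
    have hcx : ∀ n m, c n (x m) = if n = m then 1 else 0 := by
      intro n
      induction n using Nat.strong_induction_on with
      | _ n ih =>
        intro m
        rw [hcrec n]
        simp only [ContinuousLinearMap.sub_apply, ContinuousLinearMap.coe_sum',
          Finset.sum_apply, ContinuousLinearMap.smul_apply, smul_eq_mul]
        rcases lt_trichotomy n m with h | rfl | h
        · rw [hforth n m h, if_neg h.ne]
          have hz : ∀ k ∈ Finset.range n, f n (x k) * c k (x m) = 0 := by
            intro k hk
            rw [ih k (Finset.mem_range.mp hk) m, if_neg, mul_zero]
            exact ((Finset.mem_range.mp hk).trans h).ne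
          rw [Finset.sum_eq_zero hz]
          ring
        · rw [hfx n, if_pos rfl]
          have hz : ∀ k ∈ Finset.range n, f n (x k) * c k (x n) = 0 := by
            intro k hk
            rw [ih k (Finset.mem_range.mp hk) n, if_neg (Finset.mem_range.mp hk).ne, mul_zero]
          rw [Finset.sum_eq_zero hz]
          ring
        · rw [if_neg (by omega)]
          have hsum : ∑ k ∈ Finset.range n, f n (x k) * c k (x m) = f n (x m) := by
            rw [Finset.sum_eq_single m]
            · rw [ih m h m, if_pos rfl, mul_one]
            · intro k hk hkm
              rw [ih k (Finset.mem_range.mp hk) m, if_neg hkm, mul_zero]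
            · intro hm
              exact absurd (Finset.mem_range.mpr h) hm
          rw [hsum]
          ring
    -- norm bound on coordinate functionals
    have hcnorm : ∀ n, ‖c n‖ ≤ 2^n := by
      intro n
      induction n using Nat.strong_induction_on with
      | _ n ih =>
        rw [hcrec n]
        have hgs : ∑ k ∈ Finset.range n, (2:ℝ)^k = 2^n - 1 := by
          rw [geom_sum_eq (by norm_num : (2:ℝ) ≠ 1)]
          norm_num
        calc ‖f n - ∑ k ∈ Finset.range n, (f n (x k)) • c k‖
            ≤ ‖f n‖ + ‖∑ k ∈ Finset.range n, (f n (x k)) • c k‖ := norm_sub_le _ _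
          _ ≤ 1 + ∑ k ∈ Finset.range n, ‖(f n (x k)) • c k‖ := by
              rw [hfn n]
              exact add_le_add_right (norm_sum_le _ _) 1
          _ ≤ 1 + ∑ k ∈ Finset.range n, (2:ℝ)^k := by
              refine add_le_add_right (Finset.sum_le_sum fun k hk => ?_) 1
              have h1 : ‖f n (x k)‖ ≤ 1 := by
                have := (f n).le_opNorm (x k)
                rwa [hfn n, hx1 k, one_mul] at this
              calc ‖(f n (x k)) • c k‖ = ‖f n (x k)‖ * ‖c k‖ := norm_smul (f n (x k)) (c k)
                _ ≤ 1 * (2:ℝ)^k :=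
                    mul_le_mul h1 (ih k (Finset.mem_range.mp hk)) (norm_nonneg _) zero_le_one
                _ = (2:ℝ)^k := one_mul _
          _ = 2^n := by rw [hgs]; ring
    -- coefficients of span elements
    have hcy : ∀ (a : ℕ →₀ ℝ) (j : ℕ), c j (a.sum fun i r => r • x i) = a j := by
      intro a j
      rw [Finsupp.sum, map_sum]
      have : ∀ k ∈ a.support, c j (a k • x k) = if j = k then a k else 0 := by
        intro k _
        rw [map_smul, smul_eq_mul, hcx j k]
        split <;> simp
      rw [Finset.sum_congr rfl this, Finset.sum_ite_eq]
      split
      · rfl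
      · exact (Finsupp.notMem_support_iff.mp (by assumption)).symm
    set span0 : Submodule ℝ X := Submodule.span ℝ (Set.range x) with hspan0
    -- main estimate on the span
    have hest : ∀ (N : ℕ) (y : X), y ∈ span0 →
        ‖T y - ∑ k ∈ Finset.range N, (c k y) • T (x k)‖ ≤ (2 * ε' * (2:ℝ)⁻¹^N) * ‖y‖ := by
      intro N y hy
      obtain ⟨a, rfl⟩ := Finsupp.mem_span_range_iff_exists_finsupp.mp hy
      set y : X := a.sum fun i r => r • x i with hy0
      set v : Finset ℕ := a.support ∪ Finset.range N with hv
      have hrsub : Finset.range N ⊆ v := Finset.subset_union_right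
      have h1 : T y = ∑ k ∈ v, a k • T (x k) := by
        rw [hy0, Finsupp.sum, map_sum]
        have : ∀ k ∈ a.support, T (a k • x k) = a k • T (x k) := fun k _ => map_smul T _ _
        rw [Finset.sum_congr rfl this]
        apply Finset.sum_subset Finset.subset_union_left
        intro k _ hk'
        rw [Finsupp.notMem_support_iff.mp hk', zero_smul]
      have h3 : T y - ∑ k ∈ Finset.range N, (c k y) • T (x k)
          = ∑ k ∈ v \ Finset.range N, a k • T (x k) := by
        have h2 : ∑ k ∈ Finset.range N, (c k y) • T (x k)
            = ∑ k ∈ Finset.range N, a k • T (x k) :=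
          Finset.sum_congr rfl fun k _ => by rw [hy0, hcy a k]
        rw [h1, h2, ← Finset.sum_sdiff hrsub, add_sub_cancel_right]
      rw [h3]
      have hterm : ∀ k ∈ v \ Finset.range N, ‖a k • T (x k)‖ ≤ ε' * (2:ℝ)⁻¹^k * ‖y‖ := by
        intro k hk
        have hak : ‖a k‖ ≤ 2^k * ‖y‖ := by
          have : a k = c k y := by rw [hy0, hcy a k]
          rw [this]
          calc ‖c k y‖ ≤ ‖c k‖ * ‖y‖ := (c k).le_opNorm y
            _ ≤ 2^k * ‖y‖ := mul_le_mul_of_nonneg_right (hcnorm k) (norm_nonneg _)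
        have hTk : ‖T (x k)‖ ≤ ε' * (4:ℝ)⁻¹^k := (hTx k).le
        calc ‖a k • T (x k)‖ = ‖a k‖ * ‖T (x k)‖ := norm_smul _ _
          _ ≤ (2^k * ‖y‖) * (ε' * (4:ℝ)⁻¹^k) :=
              mul_le_mul hak hTk (norm_nonneg _) (by positivity)
          _ = ε' * ((2:ℝ)^k * (4:ℝ)⁻¹^k) * ‖y‖ := by ring
          _ = ε' * (2:ℝ)⁻¹^k * ‖y‖ := by
              rw [← mul_pow]
              norm_num
      calc ‖∑ k ∈ v \ Finset.range N, a k • T (x k)‖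
          ≤ ∑ k ∈ v \ Finset.range N, ‖a k • T (x k)‖ := norm_sum_le _ _
        _ ≤ ∑ k ∈ v \ Finset.range N, ε' * (2:ℝ)⁻¹^k * ‖y‖ := Finset.sum_le_sum hterm
        _ = ε' * (∑ k ∈ v \ Finset.range N, (2:ℝ)⁻¹^k) * ‖y‖ := by
            rw [← Finset.sum_mul, ← Finset.mul_sum]
        _ ≤ ε' * (2 * (2:ℝ)⁻¹^N) * ‖y‖ := by
            have ht := aux_tail N (v \ Finset.range N) (fun k hk => by
              have := (Finset.mem_sdiff.mp hk).2
              simpa using Nat.le_of_not_lt (fun h => this (Finset.mem_range.mpr h)))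
            exact mul_le_mul_of_nonneg_right
              (mul_le_mul_of_nonneg_left ht hε'pos.le) (norm_nonneg _)
        _ = (2 * ε' * (2:ℝ)⁻¹^N) * ‖y‖ := by ring
    -- pass to the closure
    set Y : Submodule ℝ X := span0.topologicalClosure with hY
    have hYclosed : IsClosed (Y : Set X) := Submodule.isClosed_topologicalClosure span0
    have hestY : ∀ (N : ℕ) (y : X), y ∈ Y →
        ‖T y - ∑ k ∈ Finset.range N, (c k y) • T (x k)‖ ≤ (2 * ε' * (2:ℝ)⁻¹^N) * ‖y‖ := by
      intro N
      have hD : IsClosed {y : X |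
          ‖T y - ∑ k ∈ Finset.range N, (c k y) • T (x k)‖ ≤ (2 * ε' * (2:ℝ)⁻¹^N) * ‖y‖} := by
        apply isClosed_le
        · exact (T.continuous.sub (continuous_finset_sum _ fun k _ =>
            ((c k).continuous.smul continuous_const))).norm
        · exact continuous_const.mul continuous_norm
      intro y hy
      have hsubset : (span0 : Set X) ⊆ {y : X |
          ‖T y - ∑ k ∈ Finset.range N, (c k y) • T (x k)‖ ≤ (2 * ε' * (2:ℝ)⁻¹^N) * ‖y‖} :=
        fun z hz => hest N z hz
      have hsub2 : (Y : Set X) ⊆ {y : X |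
          ‖T y - ∑ k ∈ Finset.range N, (c k y) • T (x k)‖ ≤ (2 * ε' * (2:ℝ)⁻¹^N) * ‖y‖} := by
        rw [hY, Submodule.topologicalClosure_coe]
        exact closure_minimal hsubset hD
      exact hsub2 hy
    -- membership of the sequence
    have hxY : ∀ n, x n ∈ Y := fun n =>
      Submodule.le_topologicalClosure span0 (Submodule.subset_span ⟨n, rfl⟩)
    clear_value span0 Y
    refine ⟨Y, hYclosed, ?_, ⟨2 * ε', by positivity, by rw [hε']; linarith, ?_⟩, ?_⟩
    · -- not finite-dimensional
      intro hfin
      set x' : ℕ → Y := fun n => ⟨x n, hxY n⟩ with hx'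
      have hli : LinearIndependent ℝ x' := by
        rw [linearIndependent_iff]
        intro l hl
        have hl' : (l.sum fun i r => r • x i) = 0 := by
          have := congrArg (Subtype.val : Y → X) hl
          rw [Finsupp.linearCombination_apply] at this
          simpa [Finsupp.sum, hx'] using this
        ext j
        have := hcy l j
        rw [hl', map_zero] at this
        exact this.symm
      exact Module.Finite.not_linearIndependent_of_infinite x' hli
    · -- norm bound
      intro y hy
      have := hestY 0 y hy
      simpa using this
    · -- compactness
      let A : Y →L[ℝ] X := T.comp Y.subtypeL
      have hfun : (fun y : Y => T (y : X)) = ⇑A := rfl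
      rw [hfun]
      let S : ℕ → (Y →L[ℝ] X) := fun N =>
        ∑ k ∈ Finset.range N, ((c k).comp Y.subtypeL).smulRight (T (x k))
      have hScompact : ∀ N, IsCompactOperator (⇑(S N)) := by
        intro N
        induction N with
        | zero =>
          have : (S 0) = 0 := by simp [S]
          rw [this]
          exact isCompactOperator_zero
        | succ N ih =>
          have hsucc : S (N+1) = S N + ((c N).comp Y.subtypeL).smulRight (T (x N)) := by
            simp [S, Finset.sum_range_succ]
          rw [hsucc]
          have hterm : IsCompactOperator
              (⇑(((c N).comp Y.subtypeL).smulRight (T (x N)))) := by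
            have h1 : IsCompactOperator (⇑((c N).comp Y.subtypeL)) :=
              aux_compact_functional _
            have h2 := h1.continuous_comp
              (g := fun z : ℝ => z • T (x N)) (continuous_id.smul continuous_const)
            have : (fun z : ℝ => z • T (x N)) ∘ ⇑((c N).comp Y.subtypeL)
                = ⇑(((c N).comp Y.subtypeL).smulRight (T (x N))) := rfl
            rwa [this] at h2
          have hadd := ih.add hterm
          have hco : (⇑(S N + ((c N).comp Y.subtypeL).smulRight (T (x N))))
              = ⇑(S N) + ⇑(((c N).comp Y.subtypeL).smulRight (T (x N))) := rfl
          rw [hco]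
          exact hadd
      have hdiff : ∀ N, ‖A - S N‖ ≤ 2 * ε' * (2:ℝ)⁻¹^N := by
        intro N
        apply ContinuousLinearMap.opNorm_le_bound _ (by positivity)
        intro y
        have h1 : (A - S N) y = T (y : X) - ∑ k ∈ Finset.range N, (c k (y : X)) • T (x k) := by
          simp [A, S, ContinuousLinearMap.sub_apply, ContinuousLinearMap.sum_apply]
        rw [h1]
        have := hestY N (y : X) y.2
        simpa using this
      have htendsto : Tendsto S atTop (nhds A) := by
        refine (tendsto_iff_norm_sub_tendsto_zero (f := S) (a := atTop) (b := A)).mpr ?_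
        refine squeeze_zero (g := fun N : ℕ => 2 * ε' * (2:ℝ)⁻¹^N) (fun N => norm_nonneg (S N - A))
          (fun N => (norm_sub_rev (S N) A).trans_le (hdiff N)) ?_
        have h2 : Tendsto (fun N : ℕ => ((2:ℝ)⁻¹)^N) atTop (nhds 0) :=
          tendsto_pow_atTop_nhds_zero_of_lt_one (by norm_num) (by norm_num)
        have h3 := h2.const_mul (2 * ε')
        simpa [mul_assoc] using h3
      exact isCompactOperator_of_tendsto htendsto (Eventually.of_forall hScompact)
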